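/- (Monotonicity of sparsity in λ) For every u ∈ ℝ^E and reals λ ≤ λ' < 1, the maximal activation index is antitone in λ: k*(u, λ) ≥ k*(u, λ'), where k*(u, μ) = max{k ∈ {1,…,E} : 1 − μ + k·u_(k) > U_k}. Consequently, the number of activated experts of the Sparsegen routing output is nonincreasing in λ. -/

import Mathlib

noncomputable section

/-- The probability simplex in `ℝ^E`. -/
def simplex (E : ℕ) : Set (EuclideanSpace ℝ (Fin E)) :=
  {p | (∀ i, 0 ≤ p i) ∧ ∑ i, p i = 1}

/-- The Sparsegen objective `g_{u,λ}(p) = ‖p − u‖₂² − λ‖p‖₂²`. -/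
def sparsegenObj {E : ℕ} (u : EuclideanSpace ℝ (Fin E)) (lam : ℝ)
    (p : EuclideanSpace ℝ (Fin E)) : ℝ :=
  ‖p - u‖ ^ 2 - lam * ‖p‖ ^ 2

/-- `U k = Σ_{i=1}^{k} u_(i)` where `u_(i) = u (σ i)` are the sorted coordinates;
here `k : Fin E` corresponds to the paper's 1-based index `k + 1`. -/
def sortedPartialSum {E : ℕ} (u : EuclideanSpace ℝ (Fin E)) (σ : Equiv.Perm (Fin E))
    (k : Fin E) : ℝ :=
  ∑ i ∈ Finset.Iic k, u (σ i)


lemma norm_sq_eq {E : ℕ} (x : EuclideanSpace ℝ (Fin E)) : ‖x‖ ^ 2 = ∑ i, (x i) ^ 2 := by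
  rw [EuclideanSpace.norm_eq, Real.sq_sqrt (by positivity)]
  simp [sq_abs]

lemma support_card {E : ℕ} (u : EuclideanSpace ℝ (Fin E)) (σ : Equiv.Perm (Fin E))
    (hσ : Antitone fun i => u (σ i)) (lam : ℝ) (h2 : lam < 1) (kstar : Fin E)
    (hmem : 1 - lam + ((kstar : ℕ) + 1) * u (σ kstar) > sortedPartialSum u σ kstar)
    (hmax : ∀ k : Fin E,
      (1 - lam + ((k : ℕ) + 1) * u (σ k) > sortedPartialSum u σ k) → k ≤ kstar)
    (p : EuclideanSpace ℝ (Fin E)) (hp : p ∈ simplex E)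
    (hmin : IsMinOn (sparsegenObj u lam) (simplex E) p) :
    {i : Fin E | 0 < p i}.ncard = (kstar : ℕ) + 1 := by
  set c : ℝ := 1 - lam with hc
  have hcpos : 0 < c := by linarith
  set U : ℝ := sortedPartialSum u σ kstar with hU
  set τ : ℝ := (U - c) / ((kstar : ℕ) + 1) with hτ
  have hkpos : (0:ℝ) < (kstar : ℕ) + 1 := by positivity
  have hτk : ((kstar : ℕ) + 1) * τ = U - c := by
    rw [hτ, mul_div_assoc']; exact mul_div_cancel_left₀ _ (ne_of_gt hkpos)
  -- (a) sorted coordinates up to kstar exceed τ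
  have ha : ∀ i : Fin E, i ≤ kstar → τ < u (σ i) := by
    intro i hi
    have h1 : u (σ kstar) ≤ u (σ i) := hσ hi
    have h2 : U - c < ((kstar : ℕ) + 1) * u (σ kstar) := by
      simp only [hU]; linarith [hmem]
    rw [hτ, div_lt_iff₀ hkpos]
    nlinarith
  -- (b) sorted coordinates beyond kstar are ≤ τ
  have hb : ∀ i : Fin E, kstar < i → u (σ i) ≤ τ := by
    intro i hi
    have hvlt : (kstar : ℕ) + 1 < E := lt_of_le_of_lt (Nat.succ_le_of_lt hi) i.isLt
    set j : Fin E := ⟨(kstar : ℕ) + 1, hvlt⟩ with hj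
    have hji : j ≤ i := by
      rw [Fin.le_def]; exact Nat.succ_le_of_lt hi
    have hnot : ¬ (1 - lam + ((j : ℕ) + 1) * u (σ j) > sortedPartialSum u σ j) := by
      intro h
      have := hmax j h
      rw [Fin.le_def] at this
      simp [hj] at this
    have hIic : Finset.Iic j = insert j (Finset.Iic kstar) := by
      ext x
      simp only [Finset.mem_Iic, Finset.mem_insert, Fin.le_def, Fin.ext_iff]
      have hjv : (j : ℕ) = (kstar : ℕ) + 1 := rfl
      omega
    have hjnot : j ∉ Finset.Iic kstar := by
      simp only [Finset.mem_Iic, Fin.le_def]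
      simp [hj]
    have hsum : sortedPartialSum u σ j = u (σ j) + U := by
      rw [sortedPartialSum, hIic, Finset.sum_insert hjnot]; rfl
    push_neg at hnot
    rw [hsum] at hnot
    have hjval : ((j : ℕ) : ℝ) = (kstar : ℕ) + 1 := by simp [hj]
    have hle : ((kstar : ℕ) + 1) * u (σ j) ≤ U - c := by
      have := hnot
      rw [hjval] at this
      nlinarith [this]
    have hmono : u (σ i) ≤ u (σ j) := hσ hji
    calc u (σ i) ≤ u (σ j) := hmono
      _ ≤ τ := by rw [hτ, le_div_iff₀ hkpos]; linarith
  -- the explicit minimizer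
  set p₀ : EuclideanSpace ℝ (Fin E) := WithLp.toLp 2 (fun i => max (u i - τ) 0 / c) with hp₀
  have hp₀app : ∀ i, p₀ i = max (u i - τ) 0 / c := fun i => rfl
  have hp₀nonneg : ∀ i, 0 ≤ p₀ i := fun i => by
    rw [hp₀app]; positivity
  have hsum₀ : ∑ i, p₀ i = 1 := by
    have hre : ∑ i, p₀ i = ∑ i, p₀ (σ i) := (Equiv.sum_comp σ (fun i => p₀ i)).symm
    rw [hre]
    have hzero : ∀ i ∈ Finset.univ, i ∉ Finset.Iic kstar → p₀ (σ i) = 0 := by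
      intro i _ hi
      rw [Finset.mem_Iic] at hi
      have := hb i (lt_of_not_ge hi)
      rw [hp₀app, max_eq_right (by linarith), zero_div]
    rw [← Finset.sum_subset (Finset.subset_univ _) hzero]
    have heq : ∀ i ∈ Finset.Iic kstar, p₀ (σ i) = (u (σ i) - τ) / c := by
      intro i hi
      rw [Finset.mem_Iic] at hi
      rw [hp₀app, max_eq_left (le_of_lt (by linarith [ha i hi]))]
    rw [Finset.sum_congr rfl heq, ← Finset.sum_div, Finset.sum_sub_distrib,
      Finset.sum_const, Fin.card_Iic, nsmul_eq_mul]
    have : (∑ i ∈ Finset.Iic kstar, u (σ i)) = U := rfl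
    rw [this]
    push_cast
    rw [div_eq_one_iff_eq (ne_of_gt hcpos)]
    linarith [hτk]
  have hp₀mem : p₀ ∈ simplex E := ⟨hp₀nonneg, hsum₀⟩
  -- objective in coordinates
  have hobj : ∀ q : EuclideanSpace ℝ (Fin E),
      sparsegenObj u lam q = ∑ i, ((q i - u i) ^ 2 - lam * (q i) ^ 2) := by
    intro q
    rw [sparsegenObj, norm_sq_eq, norm_sq_eq, Finset.mul_sum, ← Finset.sum_sub_distrib]
    exact Finset.sum_congr rfl (fun i _ => by simp [PiLp.sub_apply])
  -- key facts about p₀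
  have hfa : ∀ i, -τ ≤ c * p₀ i - u i := by
    intro i
    rw [hp₀app]
    rcases le_or_gt (u i) τ with h | h
    · rw [max_eq_right (by linarith), zero_div, mul_zero]; linarith
    · rw [max_eq_left (by linarith), mul_div_cancel₀ _ (ne_of_gt hcpos)]; linarith
  have hfb : ∀ i, p₀ i * (c * p₀ i - u i) = -τ * p₀ i := by
    intro i
    rw [hp₀app]
    rcases le_or_gt (u i) τ with h | h
    · rw [max_eq_right (by linarith)]; ring
    · rw [max_eq_left (by linarith), mul_div_cancel₀ _ (ne_of_gt hcpos)]; ring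
  -- the main inequality
  have hkey : ∀ q : EuclideanSpace ℝ (Fin E), q ∈ simplex E →
      sparsegenObj u lam p₀ + c * ∑ i, (q i - p₀ i) ^ 2 ≤ sparsegenObj u lam q := by
    intro q hq
    rw [hobj, hobj]
    have hident : ∀ i : Fin E, ((q i - u i) ^ 2 - lam * (q i) ^ 2)
        = ((p₀ i - u i) ^ 2 - lam * (p₀ i) ^ 2) + c * (q i - p₀ i) ^ 2
          + 2 * (q i - p₀ i) * (c * p₀ i - u i) := by
      intro i; rw [hc]; ring
    rw [Finset.sum_congr rfl (fun i _ => hident i)]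
    rw [Finset.sum_add_distrib, Finset.sum_add_distrib, ← Finset.mul_sum]
    have hcross : 0 ≤ ∑ i, 2 * (q i - p₀ i) * (c * p₀ i - u i) := by
      have hsplit : ∀ i : Fin E, 2 * (q i - p₀ i) * (c * p₀ i - u i)
          = 2 * (q i * (c * p₀ i - u i)) - 2 * (p₀ i * (c * p₀ i - u i)) := by
        intro i; ring
      rw [Finset.sum_congr rfl (fun i _ => hsplit i), Finset.sum_sub_distrib]
      have h1 : ∑ i, 2 * (q i * (c * p₀ i - u i)) ≥ ∑ i, 2 * (q i * (-τ)) := by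
        apply Finset.sum_le_sum
        intro i _
        have := hfa i
        have hqi := hq.1 i
        nlinarith
      have h2 : ∑ i, 2 * (q i * (-τ)) = -2 * τ := by
        have he : ∀ i : Fin E, 2 * (q i * (-τ)) = (-2 * τ) * q i := fun i => by ring
        rw [Finset.sum_congr rfl (fun i _ => he i), ← Finset.mul_sum, hq.2, mul_one]
      have h3 : ∑ i, 2 * (p₀ i * (c * p₀ i - u i)) = -2 * τ := by
        have he : ∀ i : Fin E, 2 * (p₀ i * (c * p₀ i - u i)) = (-2 * τ) * p₀ i := fun i => by
          linear_combination 2 * hfb i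
        rw [Finset.sum_congr rfl (fun i _ => he i), ← Finset.mul_sum, hsum₀, mul_one]
      rw [h3]
      linarith [h1, h2.symm ▸ h1]
    linarith
  -- p = p₀
  have hple : sparsegenObj u lam p ≤ sparsegenObj u lam p₀ := hmin hp₀mem
  have hsq : ∑ i, (p i - p₀ i) ^ 2 ≤ 0 := by
    have := hkey p hp
    nlinarith
  have hpeq : ∀ i, p i = p₀ i := by
    intro i
    have hnn : ∀ j ∈ Finset.univ, (0:ℝ) ≤ (p j - p₀ j) ^ 2 := fun j _ => sq_nonneg _
    have := (Finset.sum_eq_zero_iff_of_nonneg hnn).mp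
      (le_antisymm hsq (Finset.sum_nonneg hnn)) i (Finset.mem_univ i)
    have := sq_eq_zero_iff.mp this
    linarith
  -- support
  have hsupp : {i : Fin E | 0 < p i} = σ '' (Set.Iic kstar) := by
    ext i
    simp only [Set.mem_setOf_eq, Set.mem_image, Set.mem_Iic]
    constructor
    · intro hi
      refine ⟨σ.symm i, ?_, by simp⟩
      rw [hpeq i, hp₀app] at hi
      by_contra hcon
      have := hb (σ.symm i) (lt_of_not_ge hcon)
      rw [Equiv.apply_symm_apply] at this
      rw [max_eq_right (by linarith), zero_div] at hi
      exact lt_irrefl 0 hi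
    · rintro ⟨j, hj, rfl⟩
      rw [hpeq, hp₀app, max_eq_left (le_of_lt (by linarith [ha j hj]))]
      exact div_pos (by linarith [ha j hj]) hcpos
  rw [hsupp, Set.ncard_image_of_injective _ σ.injective, ← Finset.coe_Iic,
    Set.ncard_coe_finset, Fin.card_Iic]

/-- Monotonicity of sparsity in `λ`: for `λ ≤ λ' < 1`, the maximal activation index
is antitone in `λ`: `k*(u, λ) ≥ k*(u, λ')` (here `kstar, kstar' : Fin E` are
characterized as the maxima of the respective condition sets).  Consequently, the
number of activated experts of the Sparsegen routing output (the unique minimizer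
over the simplex) is nonincreasing in `λ`. -/
theorem kstar_antitone (E : ℕ) (hE : 1 ≤ E)
    (u : EuclideanSpace ℝ (Fin E)) (σ : Equiv.Perm (Fin E))
    (hσ : Antitone fun i => u (σ i))
    (lam lam' : ℝ) (h1 : lam ≤ lam') (h2 : lam' < 1)
    (kstar : Fin E)
    (hmem : 1 - lam + ((kstar : ℕ) + 1) * u (σ kstar) > sortedPartialSum u σ kstar)
    (hmax : ∀ k : Fin E,
      (1 - lam + ((k : ℕ) + 1) * u (σ k) > sortedPartialSum u σ k) → k ≤ kstar)
    (kstar' : Fin E)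
    (hmem' : 1 - lam' + ((kstar' : ℕ) + 1) * u (σ kstar') > sortedPartialSum u σ kstar')
    (hmax' : ∀ k : Fin E,
      (1 - lam' + ((k : ℕ) + 1) * u (σ k) > sortedPartialSum u σ k) → k ≤ kstar')
    (p p' : EuclideanSpace ℝ (Fin E))
    (hp : p ∈ simplex E) (hmin : IsMinOn (sparsegenObj u lam) (simplex E) p)
    (hp' : p' ∈ simplex E) (hmin' : IsMinOn (sparsegenObj u lam') (simplex E) p') :
    kstar' ≤ kstar ∧
    {i : Fin E | 0 < p' i}.ncard ≤ {i : Fin E | 0 < p i}.ncard := by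
  have hlam1 : lam < 1 := lt_of_le_of_lt h1 h2
  have hk : kstar' ≤ kstar := hmax kstar' (by linarith [hmem'])
  refine ⟨hk, ?_⟩
  rw [support_card u σ hσ lam hlam1 kstar hmem hmax p hp hmin,
    support_card u σ hσ lam' h2 kstar' hmem' hmax' p' hp' hmin']
  have := Fin.le_def.mp hk
  omega
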